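/- The nth quantization error of the uniform distribution on the unit interval [0,1] is 1/(12 n²). -/

import Mathlib

open Real MeasureTheory Metric
open scoped ENNReal NNReal

lemma iInf_eq_inf' (α : Finset ℝ) (h : α.Nonempty) (x : ℝ) :
    (⨅ a : α, (x - (a : ℝ)) ^ 2) = α.inf' h (fun a => (x - a) ^ 2) := by
  rw [Finset.inf'_eq_csInf_image, iInf]
  congr 1
  ext y
  simp [Set.range, Subtype.exists]

lemma infDist_eq_inf' (α : Finset ℝ) (h : α.Nonempty) (x : ℝ) :
    infDist x ↑α = α.inf' h (fun a => |x - a|) := by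
  rw [infDist_eq_iInf, Finset.inf'_eq_csInf_image, iInf]
  congr 1
  ext y
  simp [Set.range, Subtype.exists, Real.dist_eq]

lemma iInf_sq_eq (α : Finset ℝ) (h : α.Nonempty) (x : ℝ) :
    (⨅ a : α, (x - (a : ℝ)) ^ 2) = (infDist x ↑α) ^ 2 := by
  rw [iInf_eq_inf' α h, infDist_eq_inf' α h]
  obtain ⟨b, hb, hbe⟩ := Finset.exists_mem_eq_inf' h (fun a => |x - a|)
  rw [hbe]
  refine le_antisymm ((Finset.inf'_le _ hb).trans (le_of_eq (sq_abs _).symm)) ?_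
  refine Finset.le_inf' _ _ fun a ha => ?_
  rw [← sq_abs (x - a)]
  exact pow_le_pow_left₀ (abs_nonneg _) (hbe ▸ Finset.inf'_le _ ha) 2

lemma sqrt_integral (b : ℝ) (hb : 0 ≤ b) :
    ∫ t in (0:ℝ)..(b^2), Real.sqrt t = 2/3 * b^3 := by
  have hsub := intervalIntegral.integral_comp_smul_deriv (f := fun u : ℝ => u^2)
    (f' := fun u : ℝ => 2*u) (g := Real.sqrt) (a := 0) (b := b)
    (fun x _ => by simpa using hasDerivAt_pow 2 x)
    (by fun_prop) Real.continuous_sqrt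
  simp only [ne_eq, OfNat.ofNat_ne_zero, not_false_eq_true, zero_pow] at hsub
  rw [← hsub]
  simp only [Function.comp]
  have : ∀ u ∈ Set.uIcc (0:ℝ) b, (2*u) • Real.sqrt (u^2) = 2 * u^2 := by
    intro u hu
    rw [Set.uIcc_of_le hb] at hu
    rw [smul_eq_mul, Real.sqrt_sq hu.1]
    ring
  rw [intervalIntegral.integral_congr this, intervalIntegral.integral_const_mul,
    integral_pow]
  norm_num
  ring

lemma upper (n : ℕ) (hn : 1 ≤ n) :
    ∃ α : Finset ℝ, α.Nonempty ∧ α.card ≤ n ∧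
      (1 / (12 * (n:ℝ)^2)) = ∫ x in Set.Icc (0:ℝ) 1, (⨅ a : α, (x - (a:ℝ))^2) := by
  have hn0 : (0:ℝ) < n := by exact_mod_cast hn
  have h2n0 : (0:ℝ) < 2*n := by linarith
  set c : ℕ → ℝ := fun i => (2*i+1)/(2*n) with hc
  set α : Finset ℝ := (Finset.range n).image c with hα
  have hne : α.Nonempty := ⟨c 0, Finset.mem_image_of_mem c (Finset.mem_range.2 hn)⟩
  refine ⟨α, hne, (Finset.card_image_le).trans (by simp), ?_⟩
  have hcont : Continuous fun x : ℝ => (⨅ a : α, (x - (a:ℝ))^2) := by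
    have : (fun x : ℝ => (⨅ a : α, (x - (a:ℝ))^2))
        = fun x => (infDist x ↑α)^2 := funext fun x => iInf_sq_eq α hne x
    rw [this]
    exact (continuous_infDist_pt _).pow 2
  -- key pointwise claim on each cell
  have hrepr : ∀ (x : ℝ) (j : ℕ), x - c j = (2*(x*n) - (2*j+1))/(2*n) := by
    intro x j
    rw [hc]
    field_simp
  have key : ∀ i < n, ∀ x ∈ Set.Icc ((i:ℝ)/n) (((i:ℝ)+1)/n),
      (⨅ a : α, (x - (a:ℝ))^2) = (x - c i)^2 := by
    intro i hi x hx
    have h1 : (i:ℝ) ≤ x * n := by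
      have := hx.1; rw [div_le_iff₀ hn0] at this; linarith
    have h2 : x * n ≤ (i:ℝ) + 1 := by
      have := hx.2; rw [le_div_iff₀ hn0] at this; linarith
    have hxi : |x - c i| ≤ 1/(2*n) := by
      rw [hrepr, abs_div, abs_of_pos h2n0]
      gcongr
      rw [abs_le]
      constructor <;> linarith
    rw [iInf_eq_inf' α hne]
    refine le_antisymm (Finset.inf'_le _ (Finset.mem_image_of_mem c (Finset.mem_range.2 hi))) ?_
    refine Finset.le_inf' _ _ fun a ha => ?_
    obtain ⟨j, hj, rfl⟩ := Finset.mem_image.1 ha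
    rcases eq_or_ne j i with rfl | hji
    · exact le_rfl
    · have hxj : 1/(2*n) ≤ |x - c j| := by
        rw [hrepr, abs_div, abs_of_pos h2n0]
        gcongr
        rcases hji.lt_or_gt with hlt | hlt
        · have : (j:ℝ) + 1 ≤ i := by exact_mod_cast hlt
          rw [le_abs]
          left; linarith
        · have : (i:ℝ) + 1 ≤ j := by exact_mod_cast hlt
          rw [le_abs]
          right; linarith
      rw [← sq_abs (x - c i), ← sq_abs (x - c j)]
      exact pow_le_pow_left₀ (abs_nonneg _) (hxi.trans hxj) 2
  -- now compute the integral
  have hsplit : ∫ x in Set.Icc (0:ℝ) 1, (⨅ a : α, (x - (a:ℝ))^2)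
      = ∑ i ∈ Finset.range n, ∫ x in ((i:ℝ)/n)..(((i:ℝ)+1)/n), (⨅ a : α, (x - (a:ℝ))^2) := by
    rw [MeasureTheory.integral_Icc_eq_integral_Ioc, ← intervalIntegral.integral_of_le (by norm_num)]
    have := intervalIntegral.sum_integral_adjacent_intervals (a := fun i : ℕ => (i:ℝ)/n)
      (μ := volume) (n := n) (f := fun x : ℝ => (⨅ a : α, (x - (a:ℝ))^2))
      (fun i _ => hcont.intervalIntegrable _ _)
    simp only [Nat.cast_zero, zero_div, div_self hn0.ne'] at this
    rw [← this]
    refine Finset.sum_congr rfl fun i _ => ?_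
    norm_num
  rw [hsplit]
  have hcell : ∀ i ∈ Finset.range n,
      ∫ x in ((i:ℝ)/n)..(((i:ℝ)+1)/n), (⨅ a : α, (x - (a:ℝ))^2) = 1/(12*(n:ℝ)^3) := by
    intro i hi
    rw [Finset.mem_range] at hi
    have hle : (i:ℝ)/n ≤ ((i:ℝ)+1)/n := by gcongr <;> linarith
    rw [intervalIntegral.integral_congr (g := fun x => (x - c i)^2)
      (fun x hx => key i hi x ((Set.uIcc_of_le hle) ▸ hx))]
    rw [show ((fun x : ℝ => (x - c i)^2)) = fun x => (fun y : ℝ => y^2) (x - c i) from rfl]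
    rw [intervalIntegral.integral_comp_sub_right (fun y : ℝ => y^2) (c i)]
    have ea : (i:ℝ)/n - c i = -(1/(2*n)) := by rw [hc]; field_simp; ring
    have eb : ((i:ℝ)+1)/n - c i = 1/(2*n) := by rw [hc]; field_simp; ring
    rw [ea, eb, integral_pow]
    field_simp
    ring_nf
    rw [← mul_pow, mul_inv_cancel₀ hn0.ne', one_pow, one_mul]
  rw [Finset.sum_congr rfl hcell]
  simp [Finset.sum_const]
  field_simp
lemma lower (n : ℕ) (hn : 1 ≤ n) (α : Finset ℝ) (hne : α.Nonempty) (hcard : α.card ≤ n) :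
    1/(12*(n:ℝ)^2) ≤ ∫ x in Set.Icc (0:ℝ) 1, (⨅ a : α, (x - (a:ℝ))^2) := by
  have hn0 : (0:ℝ) < n := by exact_mod_cast hn
  set μ : Measure ℝ := volume.restrict (Set.Icc (0:ℝ) 1) with hμ
  set f : ℝ → ℝ := fun x => (infDist x ↑α)^2 with hf
  have hfc : Continuous f := (continuous_infDist_pt _).pow 2
  have hrw : ∫ x in Set.Icc (0:ℝ) 1, (⨅ a : α, (x - (a:ℝ))^2) = ∫ x, f x ∂μ :=
    integral_congr_ae (Filter.Eventually.of_forall fun x => iInf_sq_eq α hne x)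
  rw [hrw]
  obtain ⟨a₀, ha₀⟩ := hne
  set T : ℝ := (1/(2*(n:ℝ)))^2 with hT
  set M : ℝ := max ((1 + |a₀|)^2) T with hM
  have hμuniv : μ Set.univ = 1 := by
    rw [hμ, Measure.restrict_apply_univ, Real.volume_Icc]
    norm_num
  have hμfin : IsFiniteMeasure μ := by
    constructor; rw [hμuniv]; exact ENNReal.one_lt_top
  have hfnn : 0 ≤ᵐ[μ] f := Filter.Eventually.of_forall fun x => sq_nonneg _
  have hfint : Integrable f μ := (hfc.continuousOn).integrableOn_Icc
  have hfbdd : f ≤ᵐ[μ] fun _ => M := by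
    rw [hμ, Filter.EventuallyLE, ae_restrict_iff' measurableSet_Icc]
    refine Filter.Eventually.of_forall fun x hx => ?_
    have h1 : infDist x ↑α ≤ 1 + |a₀| := by
      refine (infDist_le_dist_of_mem ha₀).trans ?_
      rw [Real.dist_eq]
      calc |x - a₀| ≤ |x| + |a₀| := abs_sub _ _
        _ ≤ 1 + |a₀| := by
            have : |x| ≤ 1 := abs_le.2 ⟨by linarith [hx.1], hx.2⟩
            linarith
    refine le_trans ?_ (le_max_left _ _)
    exact pow_le_pow_left₀ infDist_nonneg h1 2
  have layer := hfint.integral_eq_integral_Ioc_meas_le hfnn hfbdd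
  rw [layer]
  set g : ℝ → ℝ := fun t => (μ {x | t ≤ f x}).toReal with hg
  set h : ℝ → ℝ := (Set.Ioc (0:ℝ) T).indicator (fun t => 1 - 2*n*Real.sqrt t) with hh
  -- the measure bound
  have hgge : ∀ t ∈ Set.Ioc (0:ℝ) T, 1 - 2*(n:ℝ)*Real.sqrt t ≤ g t := by
    intro t ht
    have ht0 : 0 < t := ht.1
    have hst0 : 0 < Real.sqrt t := Real.sqrt_pos.2 ht0
    have hs : MeasurableSet {x : ℝ | t ≤ f x} :=
      measurableSet_le measurable_const hfc.measurable
    have hcompl : {x : ℝ | t ≤ f x}ᶜ ⊆ ⋃ a ∈ α, ball (a:ℝ) (Real.sqrt t) := by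
      intro x hx
      simp only [Set.mem_compl_iff, Set.mem_setOf_eq, not_le] at hx
      have : infDist x ↑α < Real.sqrt t := by
        rw [← Real.sqrt_sq (infDist_nonneg (x := x) (s := (↑α : Set ℝ)))]
        exact Real.sqrt_lt_sqrt (sq_nonneg _) hx
      obtain ⟨a, ha, hd⟩ := (infDist_lt_iff ⟨a₀, ha₀⟩).1 this
      exact Set.mem_biUnion ha (mem_ball'.2 (by rwa [dist_comm]))
    have hμcompl : μ {x : ℝ | t ≤ f x}ᶜ ≤ ENNReal.ofReal (2*n*Real.sqrt t) := by
      calc μ {x : ℝ | t ≤ f x}ᶜ ≤ μ (⋃ a ∈ α, ball (a:ℝ) (Real.sqrt t)) :=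
            measure_mono hcompl
        _ ≤ volume (⋃ a ∈ α, ball (a:ℝ) (Real.sqrt t)) := by
            rw [hμ]; exact Measure.restrict_le_self _
        _ ≤ ∑ a ∈ α, volume (ball (a:ℝ) (Real.sqrt t)) := measure_biUnion_finset_le _ _
        _ = ∑ b ∈ α, ENNReal.ofReal (2*Real.sqrt t) := by
            simp only [Real.volume_ball]
        _ = (α.card : ℝ≥0∞) * ENNReal.ofReal (2*Real.sqrt t) := by
            rw [Finset.sum_const, nsmul_eq_mul]
        _ ≤ (n : ℝ≥0∞) * ENNReal.ofReal (2*Real.sqrt t) := by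
            gcongr <;> try exact_mod_cast hcard

        _ = ENNReal.ofReal (2*n*Real.sqrt t) := by
            rw [← ENNReal.ofReal_natCast n, ← ENNReal.ofReal_mul (by positivity)]
            congr 1
            ring
    have hadd : μ {x : ℝ | t ≤ f x} + μ {x : ℝ | t ≤ f x}ᶜ = 1 := by
      rw [measure_add_measure_compl hs, hμuniv]
    have hfin1 : μ {x : ℝ | t ≤ f x} ≠ ⊤ := measure_ne_top μ _
    have hfin2 : μ {x : ℝ | t ≤ f x}ᶜ ≠ ⊤ := measure_ne_top μ _
    have htoReal : g t + (μ {x : ℝ | t ≤ f x}ᶜ).toReal = 1 := by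
      rw [hg, ← ENNReal.toReal_add hfin1 hfin2, hadd, ENNReal.toReal_one]
    have hc2 : (μ {x : ℝ | t ≤ f x}ᶜ).toReal ≤ 2*n*Real.sqrt t :=
      ENNReal.toReal_le_of_le_ofReal (by positivity) hμcompl
    linarith
  -- integrability of g and h on Ioc 0 M
  have hganti : Antitone g := by
    intro s t hst
    exact ENNReal.toReal_mono (measure_ne_top μ _)
      (measure_mono fun x hx => le_trans hst hx)
  have hgint : IntegrableOn g (Set.Ioc 0 M) := by
    apply Measure.integrableOn_of_bounded (M := 1) measure_Ioc_lt_top.ne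
      hganti.measurable.aestronglyMeasurable
    refine Filter.Eventually.of_forall fun t => ?_
    rw [Real.norm_eq_abs, abs_of_nonneg ENNReal.toReal_nonneg]
    refine ENNReal.toReal_le_of_le_ofReal one_pos.le ?_
    rw [ENNReal.ofReal_one, ← hμuniv]
    exact measure_mono (Set.subset_univ _)
  have hhc : Continuous fun t : ℝ => 1 - 2*(n:ℝ)*Real.sqrt t := by fun_prop
  have hhint : IntegrableOn h (Set.Ioc 0 M) := by
    rw [hh]
    apply Integrable.integrableOn
    apply (IntegrableOn.integrable_indicator · measurableSet_Ioc)
    exact (hhc.continuousOn).integrableOn_compact isCompact_Icc |>.mono_set Set.Ioc_subset_Icc_self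
  have hTM : T ≤ M := le_max_right _ _
  have hmono : ∫ t in Set.Ioc (0:ℝ) M, h t ≤ ∫ t in Set.Ioc (0:ℝ) M, g t := by
    refine setIntegral_mono_on hhint hgint measurableSet_Ioc fun t ht => ?_
    rw [hh]
    by_cases hmem : t ∈ Set.Ioc (0:ℝ) T
    · rw [Set.indicator_of_mem hmem]
      exact hgge t hmem
    · rw [Set.indicator_of_notMem hmem]
      exact ENNReal.toReal_nonneg
  refine le_trans ?_ hmono
  -- compute ∫ h
  have hind : ∫ t in Set.Ioc (0:ℝ) M, h t
      = ∫ t in Set.Ioc (0:ℝ) T, (1 - 2*(n:ℝ)*Real.sqrt t) := by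
    rw [hh, setIntegral_indicator measurableSet_Ioc]
    congr 1
    rw [Set.Ioc_inter_Ioc]
    congr 1 <;> simp [hTM]
  rw [hind]
  rw [← intervalIntegral.integral_of_le (by positivity)]
  have hsplit : ∫ t in (0:ℝ)..T, (1 - 2*(n:ℝ)*Real.sqrt t)
      = (∫ t in (0:ℝ)..T, (1:ℝ)) - ∫ t in (0:ℝ)..T, 2*(n:ℝ)*Real.sqrt t := by
    apply intervalIntegral.integral_sub intervalIntegrable_const
    apply Continuous.intervalIntegrable
    fun_prop
  rw [hsplit, intervalIntegral.integral_const, intervalIntegral.integral_const_mul,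
    hT, sqrt_integral (1/(2*(n:ℝ))) (by positivity)]
  rw [smul_eq_mul]
  apply le_of_eq
  field_simp
  ring

/-- The `n`th quantization error of the uniform distribution on `[0,1]` is `1/(12 n²)`. -/
theorem quantization_error_uniform_unit_interval (n : ℕ) (hn : 1 ≤ n) :
    sInf { V : ℝ | ∃ α : Finset ℝ, α.Nonempty ∧ α.card ≤ n ∧
        V = ∫ x in Set.Icc (0 : ℝ) 1, (⨅ a : α, (x - (a : ℝ)) ^ 2) }
      = 1 / (12 * (n : ℝ) ^ 2) := by
  obtain ⟨α₀, hne₀, hcard₀, hval₀⟩ := upper n hn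
  have hmem : 1 / (12 * (n : ℝ) ^ 2) ∈ { V : ℝ | ∃ α : Finset ℝ, α.Nonempty ∧ α.card ≤ n ∧
      V = ∫ x in Set.Icc (0 : ℝ) 1, (⨅ a : α, (x - (a : ℝ)) ^ 2) } := ⟨α₀, hne₀, hcard₀, hval₀⟩
  have hlb : ∀ V ∈ { V : ℝ | ∃ α : Finset ℝ, α.Nonempty ∧ α.card ≤ n ∧
      V = ∫ x in Set.Icc (0 : ℝ) 1, (⨅ a : α, (x - (a : ℝ)) ^ 2) },
      1 / (12 * (n : ℝ) ^ 2) ≤ V := by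
    rintro V ⟨α, hne, hcard, rfl⟩
    exact lower n hn α hne hcard
  exact le_antisymm (csInf_le ⟨_, hlb⟩ hmem) (le_csInf ⟨_, hmem⟩ hlb)
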